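/- For all t > 0, ϑ > 0 and x ∈ ℝ² ∖ {0}, the ℝ²-valued identity ∫_{ℝ²} y · K₀(√(2ϑ)‖y‖) · g_t(x−y) dy = e^{ϑ t} · ( K₀(√(2ϑ)‖x‖, ϑ t) · x − √(2ϑ) · t · K₁(√(2ϑ)‖x‖, ϑ t) · (x/‖x‖) ) holds. -/

import Mathlib

open MeasureTheory Real

noncomputable section

/-- The plane `ℝ²`. -/
abbrev E2 := EuclideanSpace ℝ (Fin 2)

/-- The two-dimensional Gaussian heat kernel `g_t(x) = (2πt)⁻¹ exp(−‖x‖²/(2t))`. -/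
def gauss (t : ℝ) (x : E2) : ℝ := (2 * π * t)⁻¹ * Real.exp (-‖x‖ ^ 2 / (2 * t))

/-- The modified Bessel function of the second kind of order 0,
`K₀(z) = (1/2) ∫₀^∞ a⁻¹ exp(−a − z²/(4a)) da`. -/
def besselK0 (z : ℝ) : ℝ :=
  (1 / 2 : ℝ) * ∫ a in Set.Ioi (0 : ℝ), a⁻¹ * Real.exp (-a - z ^ 2 / (4 * a))

/-- The incomplete modified Bessel function of the second kind of order `ν`,
`K_ν(z,y) = (1/2)(z/2)^ν ∫_y^∞ a^{−ν−1} exp(−a − z²/(4a)) da`. -/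
def besselKInc (ν z y : ℝ) : ℝ :=
  (1 / 2 : ℝ) * (z / 2) ^ ν *
    ∫ a in Set.Ioi y, a ^ (-ν - 1) * Real.exp (-a - z ^ 2 / (4 * a))

open Set

lemma E2_finrank : Module.finrank ℝ E2 = 2 := by
  simp [finrank_euclideanSpace]

lemma integral_exp_E2 {b : ℝ} (hb : 0 < b) :
    ∫ v : E2, rexp (-b * ‖v‖ ^ 2) = π / b := by
  rw [GaussianFourier.integral_rexp_neg_mul_sq_norm hb, E2_finrank]
  norm_num

lemma integrable_exp_E2 {b : ℝ} (hb : 0 < b) :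
    Integrable fun v : E2 => rexp (-b * ‖v‖ ^ 2) := by
  have h := (GaussianFourier.integrable_cexp_neg_mul_sq_norm_add
    (b := (b : ℂ)) (by simpa using hb) 0 (0 : E2)).norm
  refine h.congr (Filter.Eventually.of_forall fun v => ?_)
  simp only []
  rw [show -(b:ℂ) * (‖v‖:ℂ)^2 + 0 * ((inner ℝ (0:E2) v : ℝ):ℂ) = ((-b * ‖v‖^2 : ℝ):ℂ) by
    push_cast; ring]
  rw [Complex.norm_exp, Complex.ofReal_re]

lemma mul_exp_le {c u : ℝ} (hc : 0 < c) (hu : 0 ≤ u) :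
    u * rexp (-c * u ^ 2) ≤ (Real.sqrt c)⁻¹ := by
  have hs : 0 < Real.sqrt c := Real.sqrt_pos.mpr hc
  have hE : 0 < rexp (c * u ^ 2) := Real.exp_pos _
  have he : 1 + c * u ^ 2 ≤ rexp (c * u ^ 2) := by
    have := Real.add_one_le_exp (c * u ^ 2); linarith
  have key : u * Real.sqrt c ≤ rexp (c * u ^ 2) := by
    have h1 : (Real.sqrt c * u - 1) ^ 2 ≥ 0 := sq_nonneg _
    have h2 : Real.sqrt c ^ 2 = c := Real.sq_sqrt hc.le
    nlinarith
  rw [show -c * u ^ 2 = -(c * u ^ 2) by ring, Real.exp_neg]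
  calc u * (rexp (c * u ^ 2))⁻¹ ≤ (rexp (c * u ^ 2)) / Real.sqrt c * (rexp (c * u ^ 2))⁻¹ := by
        apply mul_le_mul_of_nonneg_right _ (by positivity)
        rwa [le_div_iff₀ hs]
    _ = 1 / Real.sqrt c := by field_simp
    _ ≤ (Real.sqrt c)⁻¹ := by rw [one_div]

lemma norm_mul_exp_le {b : ℝ} (hb : 0 < b) (v : E2) :
    ‖v‖ * rexp (-b * ‖v‖ ^ 2) ≤ (Real.sqrt (b / 2))⁻¹ * rexp (-(b / 2) * ‖v‖ ^ 2) := by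
  have h : rexp (-b * ‖v‖ ^ 2)
      = rexp (-(b / 2) * ‖v‖ ^ 2) * rexp (-(b / 2) * ‖v‖ ^ 2) := by
    rw [← Real.exp_add]; ring_nf
  rw [h, ← mul_assoc]
  exact mul_le_mul_of_nonneg_right
    (mul_exp_le (by linarith) (norm_nonneg v)) (Real.exp_pos _).le

lemma integrable_norm_mul_exp {b : ℝ} (hb : 0 < b) :
    Integrable fun v : E2 => ‖v‖ * rexp (-b * ‖v‖ ^ 2) := by
  refine ((integrable_exp_E2 (b := b / 2) (by linarith)).const_mul
    ((Real.sqrt (b / 2))⁻¹)).mono' ?_ ?_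
  · exact (continuous_norm.mul
      ((Real.continuous_exp.comp (by continuity)))).aestronglyMeasurable
  · refine Filter.Eventually.of_forall fun v => ?_
    rw [Real.norm_of_nonneg (by positivity)]
    exact norm_mul_exp_le hb v

lemma integral_norm_mul_exp_le {b : ℝ} (hb : 0 < b) :
    ∫ v : E2, ‖v‖ * rexp (-b * ‖v‖ ^ 2) ≤ (Real.sqrt (b / 2))⁻¹ * (π / (b / 2)) := by
  calc ∫ v : E2, ‖v‖ * rexp (-b * ‖v‖ ^ 2)
      ≤ ∫ v : E2, (Real.sqrt (b / 2))⁻¹ * rexp (-(b / 2) * ‖v‖ ^ 2) := by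
        refine integral_mono (integrable_norm_mul_exp hb)
          ((integrable_exp_E2 (by linarith)).const_mul _) fun v => norm_mul_exp_le hb v
    _ = (Real.sqrt (b / 2))⁻¹ * (π / (b / 2)) := by
        rw [MeasureTheory.integral_const_mul, integral_exp_E2 (by linarith)]

lemma integral_exp_smul_zero {b : ℝ} :
    ∫ v : E2, rexp (-b * ‖v‖ ^ 2) • v = 0 := by
  have h := MeasureTheory.integral_neg_eq_self
    (fun v : E2 => rexp (-b * ‖v‖ ^ 2) • v) volume
  simp only [norm_neg, smul_neg] at h
  rw [integral_neg] at h
  set I := ∫ v : E2, rexp (-b * ‖v‖ ^ 2) • v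
  have : I + I = 0 := by nth_rewrite 1 [← h]; abel
  have h2 : (2 : ℝ) • I = 0 := by rw [two_smul]; exact this
  simpa using (smul_eq_zero.mp h2).resolve_left (by norm_num)

lemma gauss_eq (s : ℝ) (v : E2) :
    gauss s v = (2 * π * s)⁻¹ * rexp (-(2 * s)⁻¹ * ‖v‖ ^ 2) := by
  unfold gauss
  rw [show -‖v‖ ^ 2 / (2 * s) = -(2 * s)⁻¹ * ‖v‖ ^ 2 by ring]

lemma gauss_nonneg (s : ℝ) (hs : 0 < s) (v : E2) : 0 ≤ gauss s v := by
  unfold gauss; positivity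

lemma gauss_continuous (s : ℝ) : Continuous (gauss s) := by
  unfold gauss; fun_prop

lemma integrable_gauss {s : ℝ} (hs : 0 < s) : Integrable (gauss s) := by
  rw [show gauss s = fun v : E2 => (2 * π * s)⁻¹ * rexp (-(2 * s)⁻¹ * ‖v‖ ^ 2)
    from funext (gauss_eq s)]
  exact (integrable_exp_E2 (by positivity)).const_mul _

lemma integral_gauss {s : ℝ} (hs : 0 < s) : ∫ v : E2, gauss s v = 1 := by
  simp_rw [gauss_eq]
  rw [MeasureTheory.integral_const_mul, integral_exp_E2 (by positivity)]
  have : (2 : ℝ) * π * s ≠ 0 := by positivity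
  field_simp

lemma integrable_gauss_smul {s : ℝ} (hs : 0 < s) :
    Integrable fun v : E2 => gauss s v • v := by
  refine ((integrable_norm_mul_exp (b := (2 * s)⁻¹) (by positivity)).const_mul
    ((2 * π * s)⁻¹)).mono' ((gauss_continuous s).smul continuous_id).aestronglyMeasurable ?_
  refine Filter.Eventually.of_forall fun v => ?_
  rw [norm_smul, Real.norm_of_nonneg (gauss_nonneg s hs v), gauss_eq]
  ring_nf
  exact le_refl _

lemma integral_gauss_smul_self {s : ℝ} (hs : 0 < s) :
    ∫ v : E2, gauss s v • v = 0 := by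
  simp_rw [gauss_eq, mul_smul]
  rw [integral_smul, integral_exp_smul_zero, smul_zero]

lemma integral_gauss_shift {s : ℝ} (hs : 0 < s) (m : E2) :
    ∫ v : E2, gauss s (v - m) • v = m := by
  have h := MeasureTheory.integral_add_right_eq_self
    (μ := volume) (fun v : E2 => gauss s (v - m) • v) m
  rw [← h]
  simp only [add_sub_cancel_right]
  have hsplit : (fun v : E2 => gauss s v • (v + m))
      = fun v : E2 => gauss s v • v + gauss s v • m := funext fun v => smul_add _ _ _
  rw [hsplit, integral_add (integrable_gauss_smul hs) ((integrable_gauss hs).smul_const m),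
    integral_gauss_smul_self hs, integral_smul_const, integral_gauss hs, one_smul, zero_add]

lemma gauss_prod {s t : ℝ} (hs : 0 < s) (ht : 0 < t) (x y : E2) :
    gauss s y * gauss t (x - y)
      = gauss (s + t) x * gauss (s * t / (s + t)) (y - (s / (s + t)) • x) := by
  have hst : 0 < s + t := by linarith
  unfold gauss
  rw [mul_mul_mul_comm, mul_mul_mul_comm ((2 * π * (s + t))⁻¹), ← Real.exp_add, ← Real.exp_add]
  have hxy : ‖x - y‖ ^ 2 = ‖x‖ ^ 2 - 2 * (inner ℝ x y : ℝ) + ‖y‖ ^ 2 := by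
    rw [← real_inner_self_eq_norm_sq, ← real_inner_self_eq_norm_sq,
      ← real_inner_self_eq_norm_sq, inner_sub_sub_self, real_inner_comm y x]
    ring
  have hym : ‖y - (s / (s + t)) • x‖ ^ 2
      = ‖y‖ ^ 2 - 2 * (s / (s + t)) * (inner ℝ x y : ℝ) + (s / (s + t)) ^ 2 * ‖x‖ ^ 2 := by
    rw [← real_inner_self_eq_norm_sq, ← real_inner_self_eq_norm_sq,
      ← real_inner_self_eq_norm_sq, inner_sub_sub_self, real_inner_smul_left,
      real_inner_smul_right, real_inner_smul_left, real_inner_smul_right,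
      real_inner_comm y x]
    ring
  congr 1
  · field_simp
  · rw [Real.exp_eq_exp, hxy, hym]
    field_simp
    ring

lemma conv_moment {s t : ℝ} (hs : 0 < s) (ht : 0 < t) (x : E2) :
    ∫ y : E2, (gauss s y * gauss t (x - y)) • y
      = (s / (s + t) * gauss (s + t) x) • x := by
  have hst : 0 < s + t := by linarith
  have hr : 0 < s * t / (s + t) := by positivity
  calc ∫ y : E2, (gauss s y * gauss t (x - y)) • y
      = ∫ y : E2, gauss (s + t) x •
          (gauss (s * t / (s + t)) (y - (s / (s + t)) • x) • y) := by
        refine integral_congr_ae (Filter.Eventually.of_forall fun y => ?_)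
        simp only []
        rw [gauss_prod hs ht x y, mul_smul]
    _ = gauss (s + t) x • ∫ y : E2,
          gauss (s * t / (s + t)) (y - (s / (s + t)) • x) • y := integral_smul _ _
    _ = (s / (s + t) * gauss (s + t) x) • x := by
        rw [integral_gauss_shift hr, smul_smul, mul_comm]

lemma besselK0_repr {ϑ : ℝ} (hϑ : 0 < ϑ) (y : E2) :
    besselK0 (Real.sqrt (2 * ϑ) * ‖y‖)
      = π * ∫ s in Ioi (0 : ℝ), rexp (-ϑ * s) * gauss s y := by
  set z := Real.sqrt (2 * ϑ) * ‖y‖ with hz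
  have hz2 : z ^ 2 = 2 * ϑ * ‖y‖ ^ 2 := by
    rw [hz, mul_pow, Real.sq_sqrt (by positivity)]
  have hcomp := integral_comp_mul_left_Ioi
    (fun a => a⁻¹ * Real.exp (-a - z ^ 2 / (4 * a))) 0 hϑ
  rw [mul_zero] at hcomp
  beta_reduce at hcomp
  unfold besselK0
  rw [show (∫ a in Ioi 0, a⁻¹ * rexp (-a - z ^ 2 / (4 * a)))
      = ϑ * ∫ s in Ioi 0, (ϑ * s)⁻¹ * rexp (-(ϑ * s) - z ^ 2 / (4 * (ϑ * s))) from by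
    rw [hcomp, smul_eq_mul, ← mul_assoc, mul_inv_cancel₀ hϑ.ne', one_mul]]
  have hpt : ∀ s ∈ Ioi (0 : ℝ),
      (ϑ * s)⁻¹ * Real.exp (-(ϑ * s) - z ^ 2 / (4 * (ϑ * s)))
        = (2 * π / ϑ) * (rexp (-ϑ * s) * gauss s y) := by
    intro s hs
    have hs0 : 0 < s := hs
    rw [gauss_eq,
      show -(ϑ * s) - z ^ 2 / (4 * (ϑ * s)) = -ϑ * s + -(2 * s)⁻¹ * ‖y‖ ^ 2 by
        rw [hz2]; field_simp; ring,
      Real.exp_add]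
    field_simp
  rw [setIntegral_congr_fun measurableSet_Ioi hpt, MeasureTheory.integral_const_mul]
  field_simp

lemma gauss_le {t : ℝ} (ht : 0 < t) (v : E2) : gauss t v ≤ (2 * π * t)⁻¹ := by
  unfold gauss
  have h1 : rexp (-‖v‖ ^ 2 / (2 * t)) ≤ 1 := by
    rw [Real.exp_le_one_iff]
    have h : (0:ℝ) ≤ ‖v‖ ^ 2 / (2 * t) := by positivity
    rw [neg_div]
    linarith
  have h2 : (0:ℝ) ≤ (2 * π * t)⁻¹ := by positivity
  calc (2 * π * t)⁻¹ * rexp (-‖v‖ ^ 2 / (2 * t)) ≤ (2 * π * t)⁻¹ * 1 :=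
        mul_le_mul_of_nonneg_left h1 h2
    _ = (2 * π * t)⁻¹ := mul_one _

lemma F_norm_bound {s t ϑ : ℝ} (hs : 0 < s) (ht : 0 < t) (x y : E2) :
    ‖(π * rexp (-ϑ * s) * (gauss s y * gauss t (x - y))) • y‖
      ≤ π * rexp (-ϑ * s) * (2 * π * t)⁻¹ * (2 * π * s)⁻¹
          * (‖y‖ * rexp (-(2 * s)⁻¹ * ‖y‖ ^ 2)) := by
  have hg1 : 0 ≤ gauss s y := gauss_nonneg s hs y
  have hg2 : 0 ≤ gauss t (x - y) := gauss_nonneg t ht (x - y)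
  have hc : 0 ≤ π * rexp (-ϑ * s) * (gauss s y * gauss t (x - y)) := by
    have : (0:ℝ) ≤ π * rexp (-ϑ * s) := by positivity
    exact mul_nonneg this (mul_nonneg hg1 hg2)
  rw [norm_smul, Real.norm_of_nonneg hc]
  have h1 : gauss t (x - y) ≤ (2 * π * t)⁻¹ := gauss_le ht (x - y)
  have h2 : gauss s y = (2 * π * s)⁻¹ * rexp (-(2 * s)⁻¹ * ‖y‖ ^ 2) := gauss_eq s y
  have hE : (0:ℝ) ≤ rexp (-(2 * s)⁻¹ * ‖y‖ ^ 2) := (Real.exp_pos _).le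
  have hA : (0:ℝ) ≤ π * rexp (-ϑ * s) := by positivity
  have hS : (0:ℝ) ≤ (2 * π * s)⁻¹ := by positivity
  have hn : (0:ℝ) ≤ ‖y‖ := norm_nonneg y
  calc π * rexp (-ϑ * s) * (gauss s y * gauss t (x - y)) * ‖y‖
      ≤ π * rexp (-ϑ * s) * (gauss s y * (2 * π * t)⁻¹) * ‖y‖ := by
        apply mul_le_mul_of_nonneg_right _ hn
        exact mul_le_mul_of_nonneg_left (mul_le_mul_of_nonneg_left h1 hg1) hA
    _ = π * rexp (-ϑ * s) * (2 * π * t)⁻¹ * (2 * π * s)⁻¹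
          * (‖y‖ * rexp (-(2 * s)⁻¹ * ‖y‖ ^ 2)) := by rw [h2]; ring

lemma F_integrable_y {s t ϑ : ℝ} (hs : 0 < s) (ht : 0 < t) (x : E2) :
    Integrable fun y : E2 =>
      (π * rexp (-ϑ * s) * (gauss s y * gauss t (x - y))) • y := by
  refine ((integrable_norm_mul_exp (b := (2 * s)⁻¹) (by positivity)).const_mul
    (π * rexp (-ϑ * s) * (2 * π * t)⁻¹ * (2 * π * s)⁻¹)).mono' ?_ ?_
  · exact ((continuous_const.mul ((gauss_continuous s).mul
      ((gauss_continuous t).comp (continuous_const.sub continuous_id)))).smul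
      continuous_id).aestronglyMeasurable
  · exact Filter.Eventually.of_forall fun y => F_norm_bound hs ht x y

lemma sqrt_four_s {s : ℝ} (hs : 0 < s) :
    (Real.sqrt ((2 * s)⁻¹ / 2))⁻¹ = 2 * Real.sqrt s := by
  rw [show (2 * s)⁻¹ / 2 = (4 * s)⁻¹ by field_simp; ring, Real.sqrt_inv, inv_inv,
    Real.sqrt_mul (by norm_num : (0:ℝ) ≤ 4),
    show Real.sqrt 4 = 2 by
      rw [show (4:ℝ) = 2 ^ 2 by norm_num, Real.sqrt_sq (by norm_num : (0:ℝ) ≤ 2)]]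

lemma F_integral_y_bound {s t ϑ : ℝ} (hs : 0 < s) (ht : 0 < t) (x : E2) :
    (∫ y : E2, ‖(π * rexp (-ϑ * s) * (gauss s y * gauss t (x - y))) • y‖)
      ≤ 2 / t * (Real.sqrt s * rexp (-ϑ * s)) := by
  have hI : Integrable fun y : E2 =>
      π * rexp (-ϑ * s) * (2 * π * t)⁻¹ * (2 * π * s)⁻¹
        * (‖y‖ * rexp (-(2 * s)⁻¹ * ‖y‖ ^ 2)) :=
    (integrable_norm_mul_exp (by positivity)).const_mul _
  calc (∫ y : E2, ‖(π * rexp (-ϑ * s) * (gauss s y * gauss t (x - y))) • y‖)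
      ≤ ∫ y : E2, π * rexp (-ϑ * s) * (2 * π * t)⁻¹ * (2 * π * s)⁻¹
          * (‖y‖ * rexp (-(2 * s)⁻¹ * ‖y‖ ^ 2)) :=
        integral_mono (F_integrable_y hs ht x).norm hI
          (fun y => F_norm_bound hs ht x y)
    _ = π * rexp (-ϑ * s) * (2 * π * t)⁻¹ * (2 * π * s)⁻¹
          * ∫ y : E2, ‖y‖ * rexp (-(2 * s)⁻¹ * ‖y‖ ^ 2) := MeasureTheory.integral_const_mul _ _
    _ ≤ π * rexp (-ϑ * s) * (2 * π * t)⁻¹ * (2 * π * s)⁻¹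
          * ((Real.sqrt ((2 * s)⁻¹ / 2))⁻¹ * (π / ((2 * s)⁻¹ / 2))) := by
        apply mul_le_mul_of_nonneg_left (integral_norm_mul_exp_le (by positivity))
        positivity
    _ = 2 / t * (Real.sqrt s * rexp (-ϑ * s)) := by
        rw [sqrt_four_s hs, show (2 * s)⁻¹ / 2 = (4 * s)⁻¹ by field_simp; ring]
        have hπ : π ≠ 0 := pi_ne_zero
        field_simp
        ring

lemma bound_integrable {ϑ : ℝ} (hϑ : 0 < ϑ) :
    IntegrableOn (fun s : ℝ => Real.sqrt s * rexp (-ϑ * s)) (Ioi 0) := by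
  have h := integrableOn_rpow_mul_exp_neg_mul_rpow
    (p := 1) (s := (1/2 : ℝ)) (by norm_num) one_pos hϑ
  refine (integrable_congr ?_).mp h
  rw [Filter.EventuallyEq, ae_restrict_iff' measurableSet_Ioi]
  refine Filter.Eventually.of_forall fun a ha => ?_
  rw [Real.rpow_one, Real.sqrt_eq_rpow]

lemma F_measurable (t ϑ : ℝ) (x : E2) :
    Measurable (fun p : E2 × ℝ =>
      (π * rexp (-ϑ * p.2) * (gauss p.2 p.1 * gauss t (x - p.1))) • p.1) := by
  unfold gauss
  fun_prop

lemma F_integrable {t ϑ : ℝ} (ht : 0 < t) (hϑ : 0 < ϑ) (x : E2) :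
    Integrable (fun p : E2 × ℝ =>
      (π * rexp (-ϑ * p.2) * (gauss p.2 p.1 * gauss t (x - p.1))) • p.1)
      (volume.prod (volume.restrict (Ioi 0))) := by
  have hmeas := (F_measurable t ϑ x).aestronglyMeasurable
    (μ := volume.prod (volume.restrict (Ioi 0)))
  rw [MeasureTheory.integrable_prod_iff' hmeas]
  constructor
  · rw [ae_restrict_iff' measurableSet_Ioi]
    exact Filter.Eventually.of_forall fun s hs => F_integrable_y hs ht x
  · refine Integrable.mono'
      ((bound_integrable hϑ).const_mul (2 / t)) ?_ ?_
    · exact hmeas.norm.prod_swap.integral_prod_right'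
    · rw [ae_restrict_iff' measurableSet_Ioi]
      refine Filter.Eventually.of_forall fun s hs => ?_
      rw [Real.norm_of_nonneg (integral_nonneg fun y => norm_nonneg _)]
      exact F_integral_y_bound hs ht x

lemma lhs_eq {t ϑ : ℝ} (ht : 0 < t) (hϑ : 0 < ϑ) (x : E2) :
    (∫ y : E2, (besselK0 (Real.sqrt (2 * ϑ) * ‖y‖) * gauss t (x - y)) • y)
      = (∫ s in Ioi (0:ℝ),
          π * rexp (-ϑ * s) * (s / (s + t) * gauss (s + t) x)) • x := by
  have h1 : ∀ y : E2, (besselK0 (Real.sqrt (2 * ϑ) * ‖y‖) * gauss t (x - y)) • y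
      = ∫ s in Ioi (0:ℝ),
          (π * rexp (-ϑ * s) * (gauss s y * gauss t (x - y))) • y := by
    intro y
    rw [besselK0_repr hϑ y, ← MeasureTheory.integral_const_mul,
      ← MeasureTheory.integral_mul_const, ← integral_smul_const]
    refine integral_congr_ae (Filter.Eventually.of_forall fun s => ?_)
    simp only []
    congr 1
    ring
  calc (∫ y : E2, (besselK0 (Real.sqrt (2 * ϑ) * ‖y‖) * gauss t (x - y)) • y)
      = ∫ y : E2, ∫ s in Ioi (0:ℝ),
          (π * rexp (-ϑ * s) * (gauss s y * gauss t (x - y))) • y :=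
        integral_congr_ae (Filter.Eventually.of_forall fun y => h1 y)
    _ = ∫ s in Ioi (0:ℝ), ∫ y : E2,
          (π * rexp (-ϑ * s) * (gauss s y * gauss t (x - y))) • y :=
        MeasureTheory.integral_integral_swap (F_integrable ht hϑ x)
    _ = ∫ s in Ioi (0:ℝ), (π * rexp (-ϑ * s) * (s / (s + t) * gauss (s + t) x)) • x := by
        refine setIntegral_congr_fun measurableSet_Ioi fun s hs => ?_
        have hs0 : (0:ℝ) < s := hs
        calc ∫ y : E2, (π * rexp (-ϑ * s) * (gauss s y * gauss t (x - y))) • y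
            = ∫ y : E2, (π * rexp (-ϑ * s)) • ((gauss s y * gauss t (x - y)) • y) := by
              refine integral_congr_ae (Filter.Eventually.of_forall fun y => ?_)
              simp only []
              rw [mul_smul]
          _ = (π * rexp (-ϑ * s)) • ((s / (s + t) * gauss (s + t) x) • x) := by
              rw [integral_smul, conv_moment hs0 ht x]
          _ = (π * rexp (-ϑ * s) * (s / (s + t) * gauss (s + t) x)) • x := by
              rw [smul_smul]
    _ = (∫ s in Ioi (0:ℝ),
          π * rexp (-ϑ * s) * (s / (s + t) * gauss (s + t) x)) • x :=
        integral_smul_const _ x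

lemma E_int {z c : ℝ} (hc : 0 < c) (n : ℕ) :
    IntegrableOn (fun a : ℝ => a⁻¹ ^ n * rexp (-a - z ^ 2 / (4 * a))) (Ioi c) := by
  refine (((exp_neg_integrableOn_Ioi c one_pos)).const_mul (c⁻¹ ^ n)).mono' ?_ ?_
  · apply Measurable.aestronglyMeasurable
    fun_prop
  · rw [ae_restrict_iff' measurableSet_Ioi]
    refine Filter.Eventually.of_forall fun a ha => ?_
    have ha0 : 0 < a := lt_trans hc ha
    have h1 : a⁻¹ ^ n ≤ c⁻¹ ^ n := by
      apply pow_le_pow_left₀ (by positivity)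
      exact inv_anti₀ hc (le_of_lt ha)
    have h2 : rexp (-a - z ^ 2 / (4 * a)) ≤ rexp (-a) := by
      apply Real.exp_le_exp.mpr
      have : (0:ℝ) ≤ z ^ 2 / (4 * a) := by positivity
      linarith
    rw [Real.norm_of_nonneg (by positivity)]
    calc a⁻¹ ^ n * rexp (-a - z ^ 2 / (4 * a)) ≤ c⁻¹ ^ n * rexp (-a) := by
          apply mul_le_mul h1 h2 (Real.exp_pos _).le (by positivity)
      _ = c⁻¹ ^ n * rexp (-1 * a) := by norm_num

lemma translate_Ioi (f : ℝ → ℝ) (t : ℝ) :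
    ∫ s in Ioi (0:ℝ), f s = ∫ u in Ioi t, f (u - t) := by
  rw [← integral_indicator measurableSet_Ioi, ← integral_indicator measurableSet_Ioi]
  have h := MeasureTheory.integral_add_right_eq_self
    (μ := volume) (fun u : ℝ => Set.indicator (Ioi 0) f (u - t)) t
  simp only [add_sub_cancel_right] at h
  rw [h]
  congr 1
  funext u
  by_cases hu : u - t ∈ Ioi (0:ℝ)
  · rw [Set.indicator_of_mem hu, Set.indicator_of_mem (by simpa [sub_pos] using hu)]
  · rw [Set.indicator_of_notMem hu, Set.indicator_of_notMem (by
      simpa [sub_pos] using hu)]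

lemma scalar_eq {t ϑ : ℝ} (ht : 0 < t) (hϑ : 0 < ϑ) (x : E2) (hx : x ≠ 0) :
    ∫ s in Ioi (0:ℝ), π * rexp (-ϑ * s) * (s / (s + t) * gauss (s + t) x)
      = rexp (ϑ * t) * (besselKInc 0 (Real.sqrt (2 * ϑ) * ‖x‖) (ϑ * t)
          - Real.sqrt (2 * ϑ) * t * besselKInc 1 (Real.sqrt (2 * ϑ) * ‖x‖) (ϑ * t)
              * ‖x‖⁻¹) := by
  have hxn : (0:ℝ) < ‖x‖ := norm_pos_iff.mpr hx
  set z := Real.sqrt (2 * ϑ) * ‖x‖ with hzdef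
  have hz2 : z ^ 2 = 2 * ϑ * ‖x‖ ^ 2 := by
    rw [hzdef, mul_pow, Real.sq_sqrt (by positivity)]
  have hϑt : 0 < ϑ * t := mul_pos hϑ ht
  set g : ℝ → ℝ := fun a =>
    (1 / 2) * rexp (ϑ * t) * ((a - ϑ * t) * ϑ * (a⁻¹ * a⁻¹)
      * rexp (-a - z ^ 2 / (4 * a))) with hgdef
  have step1 : (∫ s in Ioi (0:ℝ), π * rexp (-ϑ * s) * (s / (s + t) * gauss (s + t) x))
      = ∫ u in Ioi t, g (ϑ * u) := by
    rw [translate_Ioi (fun s => π * rexp (-ϑ * s) * (s / (s + t) * gauss (s + t) x)) t]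
    refine setIntegral_congr_fun measurableSet_Ioi fun u hu => ?_
    have hu0 : 0 < u := lt_trans ht hu
    simp only [sub_add_cancel]
    rw [hgdef, gauss_eq]
    have hexp : rexp (-ϑ * (u - t)) * rexp (-(2 * u)⁻¹ * ‖x‖ ^ 2)
        = rexp (ϑ * t) * rexp (-(ϑ * u) - z ^ 2 / (4 * (ϑ * u))) := by
      rw [← Real.exp_add, ← Real.exp_add]
      congr 1
      rw [hz2]
      field_simp
      ring
    have hrearr : π * rexp (-ϑ * (u - t)) * ((u - t) / u * ((2 * π * u)⁻¹
          * rexp (-(2 * u)⁻¹ * ‖x‖ ^ 2)))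
        = (π * ((u - t) / u * (2 * π * u)⁻¹))
            * (rexp (-ϑ * (u - t)) * rexp (-(2 * u)⁻¹ * ‖x‖ ^ 2)) := by ring
    rw [hrearr, hexp]
    field_simp
  have step2 : (∫ u in Ioi t, g (ϑ * u)) = ϑ⁻¹ * ∫ a in Ioi (ϑ * t), g a := by
    rw [integral_comp_mul_left_Ioi g t hϑ, smul_eq_mul]
  have hI1 := E_int (z := z) hϑt 1
  have hI2 := E_int (z := z) hϑt 2
  have step3 : (∫ a in Ioi (ϑ * t), g a)
      = ϑ * rexp (ϑ * t) * ((1 / 2) * (∫ a in Ioi (ϑ * t), a⁻¹ ^ 1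
            * rexp (-a - z ^ 2 / (4 * a)))
          - (ϑ * t / 2) * ∫ a in Ioi (ϑ * t), a⁻¹ ^ 2
            * rexp (-a - z ^ 2 / (4 * a))) := by
    have hsplit : ∀ a ∈ Ioi (ϑ * t), g a
        = ϑ * rexp (ϑ * t) * ((1 / 2) * (a⁻¹ ^ 1 * rexp (-a - z ^ 2 / (4 * a)))
            - (ϑ * t / 2) * (a⁻¹ ^ 2 * rexp (-a - z ^ 2 / (4 * a)))) := by
      intro a ha
      have ha0 : 0 < a := lt_trans hϑt ha
      rw [hgdef]
      field_simp
    rw [setIntegral_congr_fun measurableSet_Ioi hsplit, MeasureTheory.integral_const_mul,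
      integral_sub ((hI1.const_mul _)) ((hI2.const_mul _)),
      MeasureTheory.integral_const_mul, MeasureTheory.integral_const_mul]
  have hK0 : besselKInc 0 z (ϑ * t)
      = (1 / 2) * ∫ a in Ioi (ϑ * t), a⁻¹ ^ 1 * rexp (-a - z ^ 2 / (4 * a)) := by
    unfold besselKInc
    rw [Real.rpow_zero, mul_one]
    congr 1
    refine setIntegral_congr_fun measurableSet_Ioi fun a ha => ?_
    have ha0 : 0 < a := lt_trans hϑt ha
    rw [show (-(0:ℝ) - 1) = ((-1 : ℤ) : ℝ) by norm_num, Real.rpow_intCast]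
    simp
  have hK1 : besselKInc 1 z (ϑ * t)
      = (1 / 2) * (z / 2) * ∫ a in Ioi (ϑ * t), a⁻¹ ^ 2
          * rexp (-a - z ^ 2 / (4 * a)) := by
    unfold besselKInc
    rw [Real.rpow_one]
    congr 1
    refine setIntegral_congr_fun measurableSet_Ioi fun a ha => ?_
    have ha0 : 0 < a := lt_trans hϑt ha
    rw [show (-(1:ℝ) - 1) = ((-2 : ℤ) : ℝ) by norm_num, Real.rpow_intCast]
    rw [show (a:ℝ) ^ (-2:ℤ) = a⁻¹ ^ 2 by
      rw [zpow_neg, inv_pow, ← zpow_natCast a 2]; norm_num]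
  rw [step1, step2, step3, hK0, hK1]
  have hsq : Real.sqrt (2 * ϑ) * Real.sqrt (2 * ϑ) = 2 * ϑ :=
    Real.mul_self_sqrt (by positivity)
  set A := ∫ a in Ioi (ϑ * t), a⁻¹ ^ 1 * rexp (-a - z ^ 2 / (4 * a)) with hA
  set B := ∫ a in Ioi (ϑ * t), a⁻¹ ^ 2 * rexp (-a - z ^ 2 / (4 * a)) with hB
  have key : Real.sqrt (2 * ϑ) * t * (1 / 2 * (z / 2) * B) * ‖x‖⁻¹
      = ϑ * t / 2 * B := by
    calc Real.sqrt (2 * ϑ) * t * (1 / 2 * (z / 2) * B) * ‖x‖⁻¹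
        = (Real.sqrt (2 * ϑ) * Real.sqrt (2 * ϑ)) * (t * B) * (‖x‖ * ‖x‖⁻¹) / 4 := by
          rw [hzdef]; ring
      _ = (2 * ϑ) * (t * B) * 1 / 4 := by rw [hsq, mul_inv_cancel₀ hxn.ne']
      _ = ϑ * t / 2 * B := by ring
  rw [key]
  field_simp

/-- For `t, ϑ > 0` and `x ≠ 0`, the vector-valued identity
`∫ y K₀(√(2ϑ)‖y‖) g_t(x−y) dy
  = e^{ϑt} ( K₀(√(2ϑ)‖x‖, ϑt) x − √(2ϑ) t K₁(√(2ϑ)‖x‖, ϑt) x/‖x‖ )` holds. -/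
theorem hat_besselK0_convolution (t ϑ : ℝ) (ht : 0 < t) (hϑ : 0 < ϑ)
    (x : E2) (hx : x ≠ 0) :
    (∫ y : E2, (besselK0 (Real.sqrt (2 * ϑ) * ‖y‖) * gauss t (x - y)) • y)
      = Real.exp (ϑ * t) •
          (besselKInc 0 (Real.sqrt (2 * ϑ) * ‖x‖) (ϑ * t) • x
            - (Real.sqrt (2 * ϑ) * t * besselKInc 1 (Real.sqrt (2 * ϑ) * ‖x‖) (ϑ * t))
                • (‖x‖⁻¹ • x)) := by
  rw [lhs_eq ht hϑ x, scalar_eq ht hϑ x hx, smul_sub, smul_smul, smul_smul, smul_smul,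
    ← sub_smul]
  congr 1
  ring
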